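/- If an m-topical map f : ℝⁿ_{≥0} → ℝⁿ_{≥0} is partially irreducible, then f is imperturbable. -/

import Mathlib

open Filter Set

/-- Vectors in ℝⁿ indexed by `Fin n`. -/
abbrev Vec (n : ℕ) := Fin n → ℝ

/-- Entrywise nonnegative vector: an element of ℝⁿ_{≥0}. -/
def Nonneg {n : ℕ} (x : Vec n) : Prop := ∀ i, 0 ≤ x i

/-- Entrywise positive vector: an element of ℝⁿ_{>0}. -/
def Pos {n : ℕ} (x : Vec n) : Prop := ∀ i, 0 < x i

/-- An m-topical map: continuous on ℝⁿ_{≥0}, preserving ℝⁿ_{≥0}, order-preserving,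
homogeneous of degree one, and mapping the interior ℝⁿ_{>0} into itself. -/
structure IsMTopical {n : ℕ} (f : Vec n → Vec n) : Prop where
  map_nonneg : ∀ x, Nonneg x → Nonneg (f x)
  contOn : ContinuousOn f {x : Vec n | Nonneg x}
  mono : ∀ x y, Nonneg x → Nonneg y → x ≤ y → f x ≤ f y
  hom : ∀ c : ℝ, 0 < c → ∀ x, Nonneg x → f (c • x) = c • f x
  map_pos : ∀ x, Pos x → Pos (f x)

/-- The indicator vector `e_J` of a subset `J ⊆ [n]`. -/
noncomputable def eVec {n : ℕ} (J : Set (Fin n)) : Vec n := J.indicator fun _ => 1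

/-- The all-ones vector `𝟙`. -/
def allOnes (n : ℕ) : Vec n := fun _ => 1
/-- The part `P_J` of the standard cone. -/
def ConePart {n : ℕ} (J : Set (Fin n)) : Set (Vec n) :=
  {x | Nonneg x ∧ ∀ i, 0 < x i ↔ i ∈ J}

/-- `f` is partially irreducible: no nontrivial proper part is invariant. -/
def PartiallyIrreducible {n : ℕ} (f : Vec n → Vec n) : Prop :=
  ¬ ∃ J : Set (Fin n), J.Nonempty ∧ J ≠ univ ∧ ∀ x ∈ ConePart J, f x ∈ ConePart J

/-- `f` is imperturbable. -/
def Imperturbable {n : ℕ} (f : Vec n → Vec n) : Prop :=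
  ¬ ∃ I J : Set (Fin n), I.Nonempty ∧ I ⊆ J ∧ J ≠ univ ∧
      (∀ i ∈ I, 0 < f (eVec I) i) ∧
      ∀ i ∉ J, ∃ C : ℝ, ∀ᶠ t : ℝ in atTop, f (allOnes n + t • eVec J) i ≤ C

lemma nonneg_eVec {n : ℕ} (J : Set (Fin n)) : Nonneg (eVec J) := by
  intro i
  unfold eVec
  classical
  by_cases h : i ∈ J
  · rw [Set.indicator_of_mem h]; norm_num
  · rw [Set.indicator_of_notMem h]

lemma eVec_le_eVec {n : ℕ} {I J : Set (Fin n)} (h : I ⊆ J) : eVec I ≤ eVec J := by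
  intro i
  classical
  by_cases hi : i ∈ I
  · unfold eVec; rw [Set.indicator_of_mem hi, Set.indicator_of_mem (h hi)]
  · unfold eVec; rw [Set.indicator_of_notMem hi]
    exact nonneg_eVec J i

lemma eVec_mem {n : ℕ} {J : Set (Fin n)} {i : Fin n} (h : i ∈ J) : eVec J i = 1 :=
  Set.indicator_of_mem h _

lemma eVec_not_mem {n : ℕ} {J : Set (Fin n)} {i : Fin n} (h : i ∉ J) : eVec J i = 0 :=
  Set.indicator_of_notMem h _

/-- Key lemma: boundedness of `f(𝟙 + t e_J)_i` forces `f(e_J)_i = 0`. -/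
lemma f_eVec_eq_zero {n : ℕ} {f : Vec n → Vec n} (hf : IsMTopical f) (J : Set (Fin n))
    (i : Fin n) (hC : ∃ C : ℝ, ∀ᶠ t : ℝ in atTop, f (allOnes n + t • eVec J) i ≤ C) :
    f (eVec J) i = 0 := by
  obtain ⟨C, hC⟩ := hC
  have hnn : 0 ≤ f (eVec J) i := hf.map_nonneg _ (nonneg_eVec J) i
  have key : ∀ ε : ℝ, 0 < ε → f (eVec J) i ≤ ε := by
    intro ε hε
    obtain ⟨t, htb, ht⟩ := ((eventually_ge_atTop (max 1 (C / ε))).and hC).exists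
    have ht1 : (1 : ℝ) ≤ t := le_trans (le_max_left _ _) htb
    have htpos : (0 : ℝ) < t := lt_of_lt_of_le one_pos ht1
    set x : Vec n := allOnes n + t • eVec J with hx
    have hxnn : Nonneg x := by
      intro j
      have := nonneg_eVec J j
      simp only [hx, Pi.add_apply, Pi.smul_apply, smul_eq_mul, allOnes]
      positivity
    have hhom : f (t⁻¹ • x) = t⁻¹ • f x := hf.hom t⁻¹ (by positivity) x hxnn
    have hle : eVec J ≤ t⁻¹ • x := by
      intro j
      have hnnj := nonneg_eVec J j
      simp only [hx, Pi.smul_apply, Pi.add_apply, smul_eq_mul, allOnes]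
      have : t⁻¹ * (1 + t * eVec J j) = t⁻¹ + eVec J j := by
        field_simp
      rw [this]
      have : (0:ℝ) < t⁻¹ := by positivity
      linarith
    have hnn2 : Nonneg (t⁻¹ • x) := by
      intro j
      simp only [Pi.smul_apply, smul_eq_mul]
      have := hxnn j
      positivity
    have h1 : f (eVec J) i ≤ f (t⁻¹ • x) i :=
      hf.mono _ _ (nonneg_eVec J) hnn2 hle i
    have h2 : f (t⁻¹ • x) i = t⁻¹ * f x i := by
      rw [hhom]; simp
    have h3 : t⁻¹ * f x i ≤ t⁻¹ * C := by
      have : (0:ℝ) ≤ t⁻¹ := by positivity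
      exact mul_le_mul_of_nonneg_left ht this
    have h4 : t⁻¹ * C ≤ ε := by
      rw [inv_mul_le_iff₀ htpos]
      have : C / ε ≤ t := le_trans (le_max_right _ _) htb
      calc C = (C / ε) * ε := by field_simp
        _ ≤ t * ε := mul_le_mul_of_nonneg_right this (le_of_lt hε)
    linarith
  by_contra h
  have hv : 0 < f (eVec J) i := lt_of_le_of_ne hnn (Ne.symm h)
  have := key (f (eVec J) i / 2) (by linarith)
  linarith

/-- Partial irreducibility implies imperturbability. -/
theorem partiallyIrreducible_imperturbable {n : ℕ} (hn : 0 < n) (f : Vec n → Vec n)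
    (hf : IsMTopical f) (hirr : PartiallyIrreducible f) : Imperturbable f := by
  classical
  rintro ⟨I, J, hIne, hIJ, hJne, hIpos, hbd⟩
  apply hirr
  -- the "step" operator
  set step : Set (Fin n) → Set (Fin n) := fun L => {i | 0 < f (eVec L) i} with hstep
  have stepmono : ∀ L M : Set (Fin n), L ⊆ M → step L ⊆ step M := by
    intro L M h i hi
    have hm := hf.mono (eVec L) (eVec M) (nonneg_eVec L) (nonneg_eVec M) (eVec_le_eVec h) i
    exact lt_of_lt_of_le hi hm
  have hIsub : ∀ L : Set (Fin n), I ⊆ L → I ⊆ step L := by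
    intro L hIL i hi
    have hm := hf.mono (eVec I) (eVec L) (nonneg_eVec I) (nonneg_eVec L) (eVec_le_eVec hIL) i
    exact lt_of_lt_of_le (hIpos i hi) hm
  set S : Set (Set (Fin n)) := {L | I ⊆ L ∧ L ⊆ J ∧ step L ⊆ L} with hS
  have hJS : J ∈ S := by
    refine ⟨hIJ, subset_rfl, ?_⟩
    intro i hi
    by_contra hiJ
    have hz := f_eVec_eq_zero hf J i (hbd i hiJ)
    have : 0 < f (eVec J) i := hi
    linarith
  obtain ⟨L, hLS, hLmin⟩ :=
    (Set.toFinite S).exists_minimalFor id S ⟨J, hJS⟩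
  have hIL : I ⊆ L := hLS.1
  have hLJ : L ⊆ J := hLS.2.1
  have hsl : step L ⊆ L := hLS.2.2
  have hstepS : step L ∈ S := ⟨hIsub L hIL, hsl.trans hLJ, stepmono _ _ hsl⟩
  have hLe : L = step L := Set.Subset.antisymm (hLmin hstepS hsl) hsl
  have hLiff : ∀ i : Fin n, 0 < f (eVec L) i ↔ i ∈ L := by
    intro i
    constructor
    · intro h
      rw [hLe]; exact h
    · intro h
      rw [hLe] at h; exact h
  -- L is a nonempty proper invariant part
  refine ⟨L, hIne.mono hIL, ?_, ?_⟩
  · -- L ≠ univ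
    obtain ⟨j, hj⟩ := (Set.ne_univ_iff_exists_notMem J).mp hJne
    intro h
    exact hj (hLJ (h ▸ Set.mem_univ j))
  · -- invariance
    rintro x ⟨hxnn, hxiff⟩
    have hne : (Finset.univ : Finset (Fin n)).Nonempty := ⟨⟨0, hn⟩, Finset.mem_univ _⟩
    set g : Fin n → ℝ := fun i => if i ∈ L then x i else 1 with hg
    set a : ℝ := Finset.univ.inf' hne g with ha
    set b : ℝ := Finset.univ.sup' hne g with hb
    have hgpos : ∀ i : Fin n, 0 < g i := by
      intro i
      by_cases hi : i ∈ L
      · simp only [hg, if_pos hi]; exact (hxiff i).mpr hi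
      · simp only [hg, if_neg hi]; norm_num
    have hapos : 0 < a := by
      rw [ha, Finset.lt_inf'_iff]
      intro i _
      exact hgpos i
    have hbpos : 0 < b := by
      have h := Finset.le_sup' g (Finset.mem_univ (⟨0, hn⟩ : Fin n))
      exact lt_of_lt_of_le (hgpos _) h
    have hax : ∀ i ∈ L, a ≤ x i := by
      intro i hi
      have h : a ≤ g i := Finset.inf'_le g (Finset.mem_univ i)
      simpa only [hg, if_pos hi] using h
    have hxb : ∀ i ∈ L, x i ≤ b := by
      intro i hi
      have h : g i ≤ b := Finset.le_sup' g (Finset.mem_univ i)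
      simpa only [hg, if_pos hi] using h
    have hxzero : ∀ i ∉ L, x i = 0 := by
      intro i hi
      have h1 : ¬ 0 < x i := fun h => hi ((hxiff i).mp h)
      have h2 := hxnn i
      linarith
    have h1 : a • eVec L ≤ x := by
      intro i
      simp only [Pi.smul_apply, smul_eq_mul]
      by_cases hi : i ∈ L
      · rw [eVec_mem hi, mul_one]; exact hax i hi
      · rw [eVec_not_mem hi, mul_zero]; exact hxnn i
    have h2 : x ≤ b • eVec L := by
      intro i
      simp only [Pi.smul_apply, smul_eq_mul]
      by_cases hi : i ∈ L
      · rw [eVec_mem hi, mul_one]; exact hxb i hi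
      · rw [eVec_not_mem hi, mul_zero, hxzero i hi]
    have hnna : Nonneg (a • eVec L) := by
      intro i
      simp only [Pi.smul_apply, smul_eq_mul]
      have := nonneg_eVec L i
      positivity
    have hnnb : Nonneg (b • eVec L) := by
      intro i
      simp only [Pi.smul_apply, smul_eq_mul]
      have := nonneg_eVec L i
      positivity
    have hlow : ∀ i, a * f (eVec L) i ≤ f x i := by
      intro i
      have := hf.mono _ _ hnna hxnn h1 i
      rwa [hf.hom a hapos _ (nonneg_eVec L), Pi.smul_apply, smul_eq_mul] at this
    have hhigh : ∀ i, f x i ≤ b * f (eVec L) i := by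
      intro i
      have := hf.mono _ _ hxnn hnnb h2 i
      rwa [hf.hom b hbpos _ (nonneg_eVec L), Pi.smul_apply, smul_eq_mul] at this
    refine ⟨hf.map_nonneg x hxnn, ?_⟩
    intro i
    constructor
    · intro h
      by_contra hi
      have hz : f (eVec L) i = 0 := by
        have h1 : ¬ 0 < f (eVec L) i := fun hh => hi ((hLiff i).mp hh)
        have h2 := hf.map_nonneg _ (nonneg_eVec L) i
        linarith
      have := hhigh i
      rw [hz, mul_zero] at this
      linarith
    · intro hi
      have hp : 0 < f (eVec L) i := (hLiff i).mpr hi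
      have := hlow i
      nlinarith
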